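/- Fix weights W, a sample index i with y_i ∈ {−1,1}, and set j = y_i; fix r ∈ {1,…,m}, λ ≥ 0, η > 0, and a batch I ⊆ {1,…,n} of size B ≥ 1 with i ∈ I. Let g = (1/B) Σ_{i'∈I} ∇_{w_{j,r}} L_{i'}(W) + λ·w_{j,r}, and define the SignSGD update w'_{j,r} = w_{j,r} − η·sgn(g), with sgn applied coordinatewise. Then ⟨w'_{j,r}, ξ_i⟩ = ⟨w_{j,r}, ξ_i⟩ + η Σ_{k∈B_i} sgn( ℓ_{j,i} σ'(⟨w_{j,r}, ξ_i⟩) ξ_i[k] − B λ w_{j,r}[k] ) · ξ_i[k] − α y_i η · sgn( Σ_{i'∈I} y_{i'} ℓ_{j,i'} [ σ'(⟨w_{j,r}, y_{i'}·v⟩) − α σ'(⟨w_{j,r}, ξ_{i'}⟩) ] − B λ w_{j,r}[1] ). -/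

import Mathlib

open scoped RealInnerProductSpace

noncomputable section SignSGDNoise

/-- Derivative of the polynomial ReLU activation `σ(z) = (max z 0)^q`. -/
def actD (q : ℕ) (z : ℝ) : ℝ := (q : ℝ) * (max z 0) ^ (q - 1)

/-- Output `F_j(W, x)` of the two-layer CNN on the input with patches `x₁, x₂`. -/
def cnnOut (q : ℕ) {d m : ℕ} (W : ℝ → Fin m → EuclideanSpace ℝ (Fin d))
    (j : ℝ) (x1 x2 : EuclideanSpace ℝ (Fin d)) : ℝ :=
  ∑ r : Fin m, ((max ⟪W j r, x1⟫ 0) ^ q + (max ⟪W j r, x2⟫ 0) ^ q)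

/-- Cross-entropy loss of the CNN on a sample with label `y` and patches `x₁, x₂`. -/
def cnnLoss (q : ℕ) {d m : ℕ} (W : ℝ → Fin m → EuclideanSpace ℝ (Fin d))
    (y : ℝ) (x1 x2 : EuclideanSpace ℝ (Fin d)) : ℝ :=
  -Real.log (Real.exp (cnnOut q W y x1 x2) /
    (Real.exp (cnnOut q W 1 x1 x2) + Real.exp (cnnOut q W (-1) x1 x2)))

/-- The quantity `ℓ_j = 𝟙[y = j] − exp(F_j)/(exp F₁ + exp F₋₁)` for a sample. -/
def ellC (q : ℕ) {d m : ℕ} (W : ℝ → Fin m → EuclideanSpace ℝ (Fin d))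
    (j y : ℝ) (x1 x2 : EuclideanSpace ℝ (Fin d)) : ℝ :=
  (if y = j then (1 : ℝ) else 0) - Real.exp (cnnOut q W j x1 x2) /
    (Real.exp (cnnOut q W 1 x1 x2) + Real.exp (cnnOut q W (-1) x1 x2))

/-- Replace the filter `w_{j,r}` of `W` by `w`, keeping all other filters fixed. -/
def updW {d m : ℕ} (W : ℝ → Fin m → EuclideanSpace ℝ (Fin d)) (j : ℝ) (r : Fin m)
    (w : EuclideanSpace ℝ (Fin d)) : ℝ → Fin m → EuclideanSpace ℝ (Fin d) :=
  Function.update W j (Function.update (W j) r w)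

/-- The coordinatewise sign of a vector. -/
def signVec {d : ℕ} (g : EuclideanSpace ℝ (Fin d)) : EuclideanSpace ℝ (Fin d) :=
  WithLp.toLp 2 (fun k => Real.sign (g k))


section Helpers
open Filter


lemma hasDerivAt_reluPow {q : ℕ} (hq : 2 ≤ q) (z : ℝ) :
    HasDerivAt (fun t : ℝ => (max t 0) ^ q) ((q : ℝ) * (max z 0) ^ (q - 1)) z := by
  have hq1 : q - 1 ≠ 0 := by omega
  have hq0 : q ≠ 0 := by omega
  rcases lt_trichotomy z 0 with h | h | h
  · have hev : (fun t : ℝ => (max t 0) ^ q) =ᶠ[nhds z] (fun _ => (0:ℝ)) := by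
      filter_upwards [Iio_mem_nhds h] with t ht
      have ht' : t < 0 := ht
      simp [max_eq_right ht'.le, zero_pow hq0]
    have h0 : HasDerivAt (fun _ : ℝ => (0:ℝ)) 0 z := hasDerivAt_const z 0
    have := h0.congr_of_eventuallyEq hev
    simpa [max_eq_right h.le, zero_pow hq1] using this
  · subst h
    have hval : (q : ℝ) * (max (0:ℝ) 0) ^ (q - 1) = 0 := by simp [zero_pow hq1]
    rw [hasDerivAt_iff_tendsto_slope, hval]
    apply squeeze_zero_norm' (a := fun t : ℝ => |t| ^ (q - 1))
    · filter_upwards [self_mem_nhdsWithin] with t (ht : t ≠ 0)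
      rw [slope_def_field]
      simp only [max_self, zero_pow hq0, sub_zero]
      rcases lt_or_ge t 0 with h' | h'
      · rw [max_eq_right h'.le, zero_pow hq0, zero_div, norm_zero]
        positivity
      · have h'' : 0 < t := lt_of_le_of_ne h' (Ne.symm ht)
        have hpq : t ^ q / t = t ^ (q - 1) := by
          conv_lhs => rw [show q = (q - 1) + 1 by omega, pow_succ, mul_div_cancel_right₀ _ ht]
        rw [max_eq_left h''.le, hpq, Real.norm_eq_abs, abs_pow]
    · have : Tendsto (fun t : ℝ => |t| ^ (q - 1)) (nhds 0) (nhds (|(0:ℝ)| ^ (q - 1))) :=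
        (continuous_abs.pow (q-1)).tendsto 0
      rw [abs_zero, zero_pow hq1] at this
      exact this.mono_left nhdsWithin_le_nhds
  · have hev : (fun t : ℝ => (max t 0) ^ q) =ᶠ[nhds z] (fun t => t ^ q) := by
      filter_upwards [Ioi_mem_nhds h] with t ht
      have ht' : (0:ℝ) < t := ht
      rw [max_eq_left ht'.le]
    have := (hasDerivAt_pow q z).congr_of_eventuallyEq hev
    simpa [max_eq_left h.le] using this

variable {d m : ℕ}

abbrev Eu (d : ℕ) := EuclideanSpace ℝ (Fin d)

lemma hasFDerivAt_reluPow_inner {q : ℕ} (hq : 2 ≤ q) (x u : Eu d) :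
    HasFDerivAt (fun w : Eu d => (max ⟪w, x⟫ 0) ^ q)
      (actD q ⟪u, x⟫ • (innerSL ℝ x : Eu d →L[ℝ] ℝ)) u := by
  have h1 : HasFDerivAt (fun w : Eu d => ⟪w, x⟫) (innerSL ℝ x : Eu d →L[ℝ] ℝ) u := by
    have h := (innerSL ℝ x : Eu d →L[ℝ] ℝ).hasFDerivAt (x := u)
    exact h.congr_of_eventuallyEq (Filter.Eventually.of_forall fun w => real_inner_comm x w)
  have h2 := (hasDerivAt_reluPow hq ⟪u, x⟫).comp_hasFDerivAt u h1
  exact h2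





lemma updW_self (W : ℝ → Fin m → Eu d) (j : ℝ) (r : Fin m) :
    updW W j r (W j r) = W := by
  unfold updW
  rw [Function.update_eq_self, Function.update_eq_self]

lemma updW_apply_self (W : ℝ → Fin m → Eu d) (j : ℝ) (r : Fin m) (w : Eu d) :
    updW W j r w j = Function.update (W j) r w := by
  unfold updW; rw [Function.update_self]

lemma updW_apply_ne (W : ℝ → Fin m → Eu d) (j : ℝ) (r : Fin m) (w : Eu d)
    {j' : ℝ} (h : j' ≠ j) : updW W j r w j' = W j' := by
  unfold updW; rw [Function.update_of_ne h]

lemma hasFDerivAt_cnnOut_upd {q : ℕ} (hq : 2 ≤ q) (W : ℝ → Fin m → Eu d)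
    (j : ℝ) (r : Fin m) (x1 x2 : Eu d) :
    HasFDerivAt (fun w => cnnOut q (updW W j r w) j x1 x2)
      (actD q ⟪W j r, x1⟫ • (innerSL ℝ x1 : Eu d →L[ℝ] ℝ)
        + actD q ⟪W j r, x2⟫ • (innerSL ℝ x2 : Eu d →L[ℝ] ℝ)) (W j r) := by
  set u := W j r with hu
  set C : ℝ := ∑ r' ∈ Finset.univ.erase r, ((max ⟪W j r', x1⟫ 0) ^ q + (max ⟪W j r', x2⟫ 0) ^ q)
    with hC
  have hfe : ∀ w : Eu d, cnnOut q (updW W j r w) j x1 x2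
      = C + ((max ⟪w, x1⟫ 0) ^ q + (max ⟪w, x2⟫ 0) ^ q) := by
    intro w
    unfold cnnOut
    rw [updW_apply_self]
    rw [← Finset.sum_erase_add _ _ (Finset.mem_univ r)]
    congr 1
    · rw [hC]
      apply Finset.sum_congr rfl
      intro r' hr'
      rw [Function.update_of_ne (Finset.ne_of_mem_erase hr')]
    · rw [Function.update_self]
  have h1 := hasFDerivAt_reluPow_inner hq x1 u
  have h2 := hasFDerivAt_reluPow_inner hq x2 u
  have h3 := (h1.add h2).const_add C
  exact h3.congr_of_eventuallyEq (Filter.Eventually.of_forall fun w => hfe w)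

lemma hasFDerivAt_logsum {f : Eu d → ℝ} {D : Eu d →L[ℝ] ℝ} {u : Eu d}
    (hf : HasFDerivAt f D u) (c : ℝ) :
    HasFDerivAt (fun w => Real.log (Real.exp (f w) + Real.exp c))
      ((Real.exp (f u) / (Real.exp (f u) + Real.exp c)) • D) u := by
  have hs : (0:ℝ) < Real.exp (f u) + Real.exp c := by positivity
  have h1 : HasFDerivAt (fun w => Real.exp (f w) + Real.exp c)
      (Real.exp (f u) • D) u :=
    ((Real.hasDerivAt_exp (f u)).comp_hasFDerivAt u hf).add_const _
  have h2 := (Real.hasDerivAt_log hs.ne').comp_hasFDerivAt u h1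
  have : (Real.exp (f u) + Real.exp c)⁻¹ • Real.exp (f u) • D
      = (Real.exp (f u) / (Real.exp (f u) + Real.exp c)) • D := by
    rw [smul_smul, div_eq_inv_mul]
  rwa [this] at h2

lemma gradient_cnnLoss {q : ℕ} (hq : 2 ≤ q) (W : ℝ → Fin m → Eu d)
    {j : ℝ} (hj : j = 1 ∨ j = -1) (r : Fin m) (y' : ℝ) (x1 x2 : Eu d) :
    gradient (fun w => cnnLoss q (updW W j r w) y' x1 x2) (W j r)
      = (-ellC q W j y' x1 x2) • (actD q ⟪W j r, x1⟫ • x1 + actD q ⟪W j r, x2⟫ • x2) := by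
  classical
  set u := W j r with hu
  set D : Eu d →L[ℝ] ℝ := actD q ⟪u, x1⟫ • (innerSL ℝ x1 : Eu d →L[ℝ] ℝ)
    + actD q ⟪u, x2⟫ • (innerSL ℝ x2 : Eu d →L[ℝ] ℝ) with hD
  have hDf : HasFDerivAt (fun w => cnnOut q (updW W j r w) j x1 x2) D u :=
    hasFDerivAt_cnnOut_upd hq W j r x1 x2
  have hFu : cnnOut q (updW W j r u) j x1 x2 = cnnOut q W j x1 x2 := by
    rw [hu, updW_self]
  have hconst : ∀ j' : ℝ, j' ≠ j → ∀ w, cnnOut q (updW W j r w) j' x1 x2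
      = cnnOut q W j' x1 x2 := by
    intro j' hj' w
    unfold cnnOut
    rw [updW_apply_ne _ _ _ _ hj']
  -- the key: HasFDerivAt of the loss with fderiv (-ℓ) • D
  have key : HasFDerivAt (fun w => cnnLoss q (updW W j r w) y' x1 x2)
      ((-ellC q W j y' x1 x2) • D) u := by
    have hmj : -j ≠ j := by rcases hj with h | h <;> subst h <;> norm_num
    -- rewrite loss
    have hrw : ∀ w, cnnLoss q (updW W j r w) y' x1 x2
        = Real.log (Real.exp (cnnOut q (updW W j r w) j x1 x2)
              + Real.exp (cnnOut q W (-j) x1 x2))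
          - cnnOut q (updW W j r w) y' x1 x2 := by
      intro w
      unfold cnnLoss
      have hsum : Real.exp (cnnOut q (updW W j r w) 1 x1 x2)
          + Real.exp (cnnOut q (updW W j r w) (-1) x1 x2)
          = Real.exp (cnnOut q (updW W j r w) j x1 x2)
            + Real.exp (cnnOut q W (-j) x1 x2) := by
        rcases hj with h | h <;> subst h
        · rw [hconst (-1) (by norm_num) w]
        · rw [hconst 1 (by norm_num) w]; norm_num [add_comm]
      rw [hsum, Real.log_div (Real.exp_ne_zero _) (by positivity), Real.log_exp]
      ring
    have hs : (0:ℝ) < Real.exp (cnnOut q W j x1 x2) + Real.exp (cnnOut q W (-j) x1 x2) := by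
      positivity
    have hlog : HasFDerivAt
        (fun w => Real.log (Real.exp (cnnOut q (updW W j r w) j x1 x2)
            + Real.exp (cnnOut q W (-j) x1 x2)))
        ((Real.exp (cnnOut q W j x1 x2)
            / (Real.exp (cnnOut q W j x1 x2) + Real.exp (cnnOut q W (-j) x1 x2))) • D) u := by
      have := hasFDerivAt_logsum hDf (cnnOut q W (-j) x1 x2)
      rwa [hFu] at this
    have hden : Real.exp (cnnOut q W j x1 x2) + Real.exp (cnnOut q W (-j) x1 x2)
        = Real.exp (cnnOut q W 1 x1 x2) + Real.exp (cnnOut q W (-1) x1 x2) := by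
      rcases hj with h | h <;> subst h
      · rfl
      · norm_num [add_comm]
    by_cases hy' : y' = j
    · have hfun : (fun w => cnnLoss q (updW W j r w) y' x1 x2)
          = fun w => Real.log (Real.exp (cnnOut q (updW W j r w) j x1 x2)
              + Real.exp (cnnOut q W (-j) x1 x2)) - cnnOut q (updW W j r w) j x1 x2 := by
        funext w; rw [hrw w, hy']
      rw [hfun]
      have h2 := hlog.sub hDf
      have heq : (Real.exp (cnnOut q W j x1 x2)
            / (Real.exp (cnnOut q W j x1 x2) + Real.exp (cnnOut q W (-j) x1 x2))) • D - D
          = (-ellC q W j y' x1 x2) • D := by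
        unfold ellC
        rw [if_pos hy', hden]
        module
      rwa [heq] at h2
    · have hc2 : ∀ w, cnnOut q (updW W j r w) y' x1 x2 = cnnOut q W y' x1 x2 :=
        hconst y' hy'
      have hfun : (fun w => cnnLoss q (updW W j r w) y' x1 x2)
          = fun w => Real.log (Real.exp (cnnOut q (updW W j r w) j x1 x2)
              + Real.exp (cnnOut q W (-j) x1 x2)) - cnnOut q W y' x1 x2 := by
        funext w; rw [hrw w, hc2 w]
      rw [hfun]
      have h2 := hlog.sub_const (cnnOut q W y' x1 x2)
      have heq : (Real.exp (cnnOut q W j x1 x2)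
            / (Real.exp (cnnOut q W j x1 x2) + Real.exp (cnnOut q W (-j) x1 x2))) • D
          = (-ellC q W j y' x1 x2) • D := by
        unfold ellC
        rw [if_neg hy', hden]
        module
      rwa [heq] at h2
  -- convert HasFDerivAt to gradient
  have hdual : (InnerProductSpace.toDual ℝ (Eu d))
      ((-ellC q W j y' x1 x2) • (actD q ⟪u, x1⟫ • x1 + actD q ⟪u, x2⟫ • x2))
      = (-ellC q W j y' x1 x2) • D := by
    ext w
    simp only [InnerProductSpace.toDual_apply_apply, hD, ContinuousLinearMap.smul_apply,
      ContinuousLinearMap.add_apply, innerSL_apply_apply, real_inner_smul_left, inner_add_left,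
      smul_eq_mul]
  have hgrad : HasGradientAt (fun w => cnnLoss q (updW W j r w) y' x1 x2)
      ((-ellC q W j y' x1 x2) • (actD q ⟪u, x1⟫ • x1 + actD q ⟪u, x2⟫ • x2)) u := by
    rw [hasGradientAt_iff_hasFDerivAt, hdual]
    exact key
  exact hgrad.gradient


lemma sign_neg_inv_mul {c t : ℝ} (hc : 0 < c) : Real.sign (-(c * t)) = -Real.sign t := by
  rcases lt_trichotomy t 0 with h | h | h
  · rw [Real.sign_of_neg h, Real.sign_of_pos (by nlinarith : (0:ℝ) < -(c * t))]
    norm_num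
  · simp [h]
  · rw [Real.sign_of_pos h, Real.sign_of_neg (by nlinarith : -(c * t) < 0)]

lemma Eu.sum_apply {ι : Type*} (s : Finset ι) (f : ι → Eu d) (k : Fin d) :
    (∑ i ∈ s, f i) k = ∑ i ∈ s, f i k := by
  classical
  induction s using Finset.cons_induction with
  | empty => rfl
  | cons a s ha ih => rw [Finset.sum_cons, Finset.sum_cons, PiLp.add_apply, ih]


end Helpers

/-- effect of one SignSGD step (with `j = y_i`, `i ∈ I`)
`w' = w_{j,r} − η·sgn(g)`, `g = (1/B) Σ_{i'∈I} ∇_{w_{j,r}} L_{i'}(W) + λ·w_{j,r}`, on the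
noise-memorization quantity `⟨w_{j,r}, ξ_i⟩`. -/
theorem signsgd_noise_memorization_update
    (d m n q : ℕ) [NeZero d] (hd : 2 ≤ d) (hm : 1 ≤ m) (hq : 3 ≤ q)
    (α : ℝ) (hα0 : 0 < α) (hα1 : α < 1)
    (y : Fin n → ℝ) (hy : ∀ i, y i = 1 ∨ y i = -1)
    (Bs : Fin n → Finset (Fin d))
    (hB1 : ∀ i, (0 : Fin d) ∉ Bs i)
    (hBdisj : ∀ i i', i ≠ i' → Disjoint (Bs i) (Bs i'))
    (ξ : Fin n → EuclideanSpace ℝ (Fin d))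
    (hξ1 : ∀ i, ξ i 0 = -α * y i)
    (hξ0 : ∀ i, ∀ k : Fin d, k ≠ 0 → k ∉ Bs i → ξ i k = 0)
    (W : ℝ → Fin m → EuclideanSpace ℝ (Fin d))
    (i : Fin n) (r : Fin m)
    (lam : ℝ) (hlam : 0 ≤ lam) (η : ℝ) (hη : 0 < η)
    (I : Finset (Fin n)) (hI : 1 ≤ I.card) (hiI : i ∈ I) :
    let v : EuclideanSpace ℝ (Fin d) := EuclideanSpace.single 0 1
    let g : EuclideanSpace ℝ (Fin d) :=
      (I.card : ℝ)⁻¹ •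
        (∑ i' ∈ I,
          gradient (fun w => cnnLoss q (updW W (y i) r w) (y i') (y i' • v) (ξ i')) (W (y i) r))
      + lam • W (y i) r
    let w' : EuclideanSpace ℝ (Fin d) := W (y i) r - η • signVec g
    ⟪w', ξ i⟫ = ⟪W (y i) r, ξ i⟫
      + η * ∑ k ∈ Bs i,
          Real.sign (ellC q W (y i) (y i) (y i • v) (ξ i) * actD q ⟪W (y i) r, ξ i⟫ * ξ i k
              - I.card * lam * W (y i) r k) * ξ i k
      - α * y i * η * Real.sign
          ((∑ i' ∈ I, y i' * ellC q W (y i) (y i') (y i' • v) (ξ i') *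
              (actD q ⟪W (y i) r, y i' • v⟫ - α * actD q ⟪W (y i) r, ξ i'⟫))
            - I.card * lam * W (y i) r 0) := by
  classical
  intro v g w'
  have hq2 : 2 ≤ q := by omega
  set u : EuclideanSpace ℝ (Fin d) := W (y i) r with hu
  have hBpos : (0:ℝ) < (I.card : ℝ) := by exact_mod_cast hI
  have hBinv : (I.card : ℝ)⁻¹ * (I.card : ℝ) = 1 := inv_mul_cancel₀ hBpos.ne'
  -- notation
  set ℓ : Fin n → ℝ := fun i' => ellC q W (y i) (y i') (y i' • v) (ξ i') with hℓ
  set a1 : Fin n → ℝ := fun i' => actD q ⟪u, y i' • v⟫ with ha1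
  set a2 : Fin n → ℝ := fun i' => actD q ⟪u, ξ i'⟫ with ha2
  -- rewrite the gradients
  have hg : g = (I.card : ℝ)⁻¹ •
      (∑ i' ∈ I, (-ℓ i') • (a1 i' • (y i' • v) + a2 i' • ξ i')) + lam • u := by
    show ((I.card : ℝ)⁻¹ •
        (∑ i' ∈ I,
          gradient (fun w => cnnLoss q (updW W (y i) r w) (y i') (y i' • v) (ξ i')) (W (y i) r))
      + lam • W (y i) r) = _
    rw [← hu]
    congr 2
    refine Finset.sum_congr rfl fun i' _ => ?_
    rw [hu]
    exact gradient_cnnLoss hq2 W (hy i) r (y i') _ _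
  -- coordinates of g
  have hgk : ∀ k : Fin d, g k = (I.card : ℝ)⁻¹ *
      (∑ i' ∈ I, (-ℓ i') * (a1 i' * (y i' * (if k = 0 then 1 else 0)) + a2 i' * ξ i' k))
      + lam * u k := by
    intro k
    rw [hg, PiLp.add_apply, PiLp.smul_apply, PiLp.smul_apply, Eu.sum_apply]
    congr 2
    refine Finset.sum_congr rfl fun i' _ => ?_
    rw [PiLp.smul_apply, PiLp.add_apply, PiLp.smul_apply, PiLp.smul_apply, PiLp.smul_apply]
    have hvk : v k = if k = 0 then 1 else 0 := EuclideanSpace.single_apply 0 1 k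
    rw [hvk]
    simp [smul_eq_mul]
  -- coordinate k ∈ Bs i
  have hsignk : ∀ k ∈ Bs i, Real.sign (g k)
      = -Real.sign (ℓ i * a2 i * ξ i k - I.card * lam * u k) := by
    intro k hk
    have hk0 : k ≠ 0 := fun h => hB1 i (h ▸ hk)
    have hsum : (∑ i' ∈ I, (-ℓ i') * (a1 i' * (y i' * (if k = 0 then 1 else 0)) + a2 i' * ξ i' k))
        = (-ℓ i) * (a2 i * ξ i k) := by
      rw [Finset.sum_eq_single_of_mem i hiI]
      · rw [if_neg hk0]; ring
      · intro i' _ hi'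
        have hξ' : ξ i' k = 0 := by
          refine hξ0 i' k hk0 fun hmem => ?_
          exact (Finset.disjoint_left.1 (hBdisj i' i hi') hmem) hk
        rw [if_neg hk0, hξ']; ring
    have : g k = -((I.card : ℝ)⁻¹ * (ℓ i * a2 i * ξ i k - I.card * lam * u k)) := by
      rw [hgk k, hsum]
      field_simp
      ring
    rw [this]
    exact sign_neg_inv_mul (inv_pos.2 hBpos)
  -- coordinate 0
  have hsign0 : Real.sign (g 0)
      = -Real.sign ((∑ i' ∈ I, y i' * ℓ i' * (a1 i' - α * a2 i'))
          - I.card * lam * u 0) := by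
    have hsum : (∑ i' ∈ I, (-ℓ i') * (a1 i' * (y i' * (if (0:Fin d) = 0 then 1 else 0))
          + a2 i' * ξ i' 0))
        = -(∑ i' ∈ I, y i' * ℓ i' * (a1 i' - α * a2 i')) := by
      rw [← Finset.sum_neg_distrib]
      refine Finset.sum_congr rfl fun i' _ => ?_
      rw [if_pos rfl, hξ1 i']
      ring
    have : g 0 = -((I.card : ℝ)⁻¹ *
        ((∑ i' ∈ I, y i' * ℓ i' * (a1 i' - α * a2 i')) - I.card * lam * u 0)) := by
      rw [hgk 0, hsum]
      field_simp
      ring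
    rw [this]
    exact sign_neg_inv_mul (inv_pos.2 hBpos)
  -- inner product expansion
  have hinner : ⟪w', ξ i⟫ = ⟪u, ξ i⟫ - η * ∑ k : Fin d, Real.sign (g k) * ξ i k := by
    show ⟪u - η • signVec g, ξ i⟫ = _
    rw [inner_sub_left, real_inner_smul_left]
    have h2 : ⟪signVec g, ξ i⟫ = ∑ k : Fin d, Real.sign (g k) * ξ i k := by
      simp [PiLp.inner_apply, RCLike.inner_apply, signVec, mul_comm]
    rw [h2]
  have hsplit : (∑ k : Fin d, Real.sign (g k) * ξ i k)
      = Real.sign (g 0) * ξ i 0 + ∑ k ∈ Bs i, Real.sign (g k) * ξ i k := by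
    have h1 : ∑ k ∈ insert (0:Fin d) (Bs i), Real.sign (g k) * ξ i k
        = Real.sign (g 0) * ξ i 0 + ∑ k ∈ Bs i, Real.sign (g k) * ξ i k :=
      Finset.sum_insert (hB1 i)
    rw [← h1]
    refine (Finset.sum_subset (Finset.subset_univ _) fun k _ hk => ?_).symm
    have hk0 : k ≠ 0 := fun h => hk (by rw [h]; exact Finset.mem_insert_self 0 _)
    have hkB : k ∉ Bs i := fun h => hk (Finset.mem_insert_of_mem h)
    rw [hξ0 i k hk0 hkB, mul_zero]
  have hBsum : (∑ k ∈ Bs i, Real.sign (g k) * ξ i k)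
      = -∑ k ∈ Bs i, Real.sign (ℓ i * a2 i * ξ i k - I.card * lam * u k) * ξ i k := by
    rw [← Finset.sum_neg_distrib]
    exact Finset.sum_congr rfl fun k hk => by rw [hsignk k hk]; ring
  rw [hinner, hsplit, hBsum, hsign0, hξ1 i]
  simp only [hℓ, ha1, ha2]
  ring
end SignSGDNoise
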